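/- The map Φ(x,y,z) = (e^{i√2 x} sin(z+π/4), e^{i√2 y} cos(z+π/4)) restricted to ℝ² × (−π/4, π/4) is a surjection onto S^3 minus the two circles C₁ = {z₂=0} and C₂ = {z₁=0}, and Φ(a,b,c) = Φ(a',b',c') if and only if c = c', a − a' ∈ (√2 π)ℤ, and b − b' ∈ (√2 π)ℤ. -/

import Mathlib

open Real

/-- The map `Φ(x,y,z) = (e^{i√2 x} sin(z+π/4), e^{i√2 y} cos(z+π/4))` into `ℂ²`. -/
noncomputable def PhiMap : ℝ × ℝ × ℝ → ℂ × ℂ := fun p =>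
  (Complex.exp (Complex.I * (Real.sqrt 2 * p.1)) * (Real.sin (p.2.2 + π / 4) : ℂ),
   Complex.exp (Complex.I * (Real.sqrt 2 * p.2.1)) * (Real.cos (p.2.2 + π / 4) : ℂ))

lemma norm_expI_mul (t u s : ℝ) :
    ‖Complex.exp (Complex.I * ((t:ℂ) * (u:ℂ))) * (s:ℂ)‖ = |s| := by
  rw [norm_mul, Complex.norm_exp]
  simp

lemma expI_eq_iff (a a' : ℝ) :
    Complex.exp (Complex.I * (Real.sqrt 2 * a)) = Complex.exp (Complex.I * (Real.sqrt 2 * a')) ↔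
      ∃ k : ℤ, a - a' = (k : ℝ) * (Real.sqrt 2 * π) := by
  have h2 : Real.sqrt 2 * Real.sqrt 2 = 2 := Real.mul_self_sqrt (by norm_num)
  rw [Complex.exp_eq_exp_iff_exists_int]
  constructor
  · rintro ⟨n, hn⟩
    refine ⟨n, ?_⟩
    have him : Real.sqrt 2 * a = Real.sqrt 2 * a' + n * (2 * π) := by
      have := congrArg Complex.im hn
      push_cast at this
      simpa [Complex.mul_im, Complex.mul_re, Complex.I_re, Complex.I_im] using this
    have hpos : (0:ℝ) < Real.sqrt 2 := Real.sqrt_pos.mpr (by norm_num)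
    have : Real.sqrt 2 * (a - a') = Real.sqrt 2 * ((n:ℝ) * (Real.sqrt 2 * π)) := by
      have : Real.sqrt 2 * ((n:ℝ) * (Real.sqrt 2 * π)) = (n:ℝ) * (2*π) := by
        calc Real.sqrt 2 * ((n:ℝ) * (Real.sqrt 2 * π))
            = (Real.sqrt 2 * Real.sqrt 2) * ((n:ℝ)*π) := by ring
          _ = (n:ℝ) * (2*π) := by rw [h2]; ring
      rw [this]; linarith [him]
    exact mul_left_cancel₀ (ne_of_gt hpos) this
  · rintro ⟨k, hk⟩
    refine ⟨k, ?_⟩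
    have : Real.sqrt 2 * a = Real.sqrt 2 * a' + k * (2 * π) := by
      have e : Real.sqrt 2 * (a - a') = (k:ℝ) * (2*π) := by
        rw [hk]
        calc Real.sqrt 2 * ((k:ℝ) * (Real.sqrt 2 * π))
            = (Real.sqrt 2 * Real.sqrt 2) * ((k:ℝ)*π) := by ring
          _ = (k:ℝ) * (2*π) := by rw [h2]; ring
      linarith
    rw [show (Real.sqrt 2 * a : ℂ) = (Real.sqrt 2 * a' : ℝ) + (k : ℝ) * (2 * π) by
      push_cast; exact_mod_cast congrArg (Complex.ofReal) this]
    push_cast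
    ring

lemma cast_combine (z : ℂ) :
    ((Real.sqrt 2 : ℝ) : ℂ) * ((z.arg / Real.sqrt 2 : ℝ) : ℂ) = (z.arg : ℂ) := by
  have hs2 : (Real.sqrt 2 : ℝ) ≠ 0 := by positivity
  push_cast
  field_simp

lemma key_arg (z : ℂ) (hz : z ≠ 0) :
    Complex.exp (Complex.I * (((Real.sqrt 2 : ℝ) : ℂ) * ((z.arg / Real.sqrt 2 : ℝ) : ℂ)))
      * (‖z‖ : ℂ) = z := by
  rw [cast_combine z, mul_comm Complex.I,
    mul_comm _ ((‖z‖ : ℂ))]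
  exact Complex.norm_mul_exp_arg_mul_I z

lemma sin_cos_pos_of_mem (c : ℝ) (hc : c ∈ Set.Ioo (-(π / 4)) (π / 4)) :
    0 < Real.sin (c + π/4) ∧ 0 < Real.cos (c + π/4) := by
  obtain ⟨h1, h2⟩ := hc
  have h0 : 0 < c + π/4 := by linarith
  have h2' : c + π/4 < π/2 := by linarith
  exact ⟨Real.sin_pos_of_pos_of_lt_pi h0 (by linarith [Real.pi_pos]),
    Real.cos_pos_of_mem_Ioo ⟨by linarith [Real.pi_pos], h2'⟩⟩

theorem PhiMap_covering :
    (∀ a b c : ℝ, c ∈ Set.Ioo (-(π / 4)) (π / 4) →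
      ‖(PhiMap (a, b, c)).1‖ ^ 2 + ‖(PhiMap (a, b, c)).2‖ ^ 2 = 1 ∧
      (PhiMap (a, b, c)).1 ≠ 0 ∧ (PhiMap (a, b, c)).2 ≠ 0) ∧
    (∀ p : ℂ × ℂ, ‖p.1‖ ^ 2 + ‖p.2‖ ^ 2 = 1 → p.1 ≠ 0 → p.2 ≠ 0 →
      ∃ a b c : ℝ, c ∈ Set.Ioo (-(π / 4)) (π / 4) ∧ PhiMap (a, b, c) = p) ∧
    (∀ a b c a' b' c' : ℝ, c ∈ Set.Ioo (-(π / 4)) (π / 4) →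
      c' ∈ Set.Ioo (-(π / 4)) (π / 4) →
      (PhiMap (a, b, c) = PhiMap (a', b', c') ↔
        c = c' ∧ (∃ k : ℤ, a - a' = (k : ℝ) * (Real.sqrt 2 * π)) ∧
          (∃ k : ℤ, b - b' = (k : ℝ) * (Real.sqrt 2 * π)))) := by
  refine ⟨?_, ?_, ?_⟩
  · intro a b c hc
    obtain ⟨hs, hco⟩ := sin_cos_pos_of_mem c hc
    refine ⟨?_, ?_, ?_⟩
    · simp only [PhiMap, norm_expI_mul, sq_abs]
      rw [sin_sq_add_cos_sq]
    · exact mul_ne_zero (Complex.exp_ne_zero _) (by exact_mod_cast hs.ne')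
    · exact mul_ne_zero (Complex.exp_ne_zero _) (by exact_mod_cast hco.ne')
  · intro p h h1 h2
    have hr1p : 0 < ‖p.1‖ := norm_pos_iff.mpr h1
    have hr2p : 0 < ‖p.2‖ := norm_pos_iff.mpr h2
    have hr1lt : ‖p.1‖ < 1 := by nlinarith
    have hsinθ : Real.sin (Real.arcsin ‖p.1‖) = ‖p.1‖ :=
      Real.sin_arcsin (by linarith) (by linarith)
    have hcosθ : Real.cos (Real.arcsin ‖p.1‖) = ‖p.2‖ := by
      rw [Real.cos_arcsin]
      have e : 1 - ‖p.1‖^2 = ‖p.2‖^2 := by linarith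
      rw [e, Real.sqrt_sq hr2p.le]
    have hθpos : 0 < Real.arcsin ‖p.1‖ := Real.arcsin_pos.mpr hr1p
    have hθlt : Real.arcsin ‖p.1‖ < π/2 := Real.arcsin_lt_pi_div_two.mpr hr1lt
    refine ⟨Complex.arg p.1 / Real.sqrt 2, Complex.arg p.2 / Real.sqrt 2,
      Real.arcsin ‖p.1‖ - π/4, ⟨by linarith, by linarith⟩, ?_⟩
    show (_, _) = p
    rw [sub_add_cancel, hsinθ, hcosθ]
    exact Prod.ext (key_arg p.1 h1) (key_arg p.2 h2)
  · intro a b c a' b' c' hc hc'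
    obtain ⟨hs, hco⟩ := sin_cos_pos_of_mem c hc
    obtain ⟨hs', hco'⟩ := sin_cos_pos_of_mem c' hc'
    constructor
    · intro h
      have h1 : Complex.exp (Complex.I * (Real.sqrt 2 * a)) * (Real.sin (c + π / 4) : ℂ)
          = Complex.exp (Complex.I * (Real.sqrt 2 * a')) * (Real.sin (c' + π / 4) : ℂ) :=
        congrArg Prod.fst h
      have h2 : Complex.exp (Complex.I * (Real.sqrt 2 * b)) * (Real.cos (c + π / 4) : ℂ)
          = Complex.exp (Complex.I * (Real.sqrt 2 * b')) * (Real.cos (c' + π / 4) : ℂ) :=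
        congrArg Prod.snd h
      have hnorm := congrArg norm h1
      rw [norm_expI_mul, norm_expI_mul, abs_of_pos hs, abs_of_pos hs'] at hnorm
      have hcc : c = c' := by
        have hmem : c + π/4 ∈ Set.Icc (-(π/2)) (π/2) := by
          obtain ⟨u, v⟩ := hc
          constructor <;> [linarith [Real.pi_pos]; linarith]
        have hmem' : c' + π/4 ∈ Set.Icc (-(π/2)) (π/2) := by
          obtain ⟨u, v⟩ := hc'
          constructor <;> [linarith [Real.pi_pos]; linarith]
        have := Real.injOn_sin hmem hmem' hnorm
        linarith
      subst hcc
      refine ⟨rfl, ?_, ?_⟩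
      · exact (expI_eq_iff a a').mp
          (mul_right_cancel₀ (by exact_mod_cast hs.ne') h1)
      · exact (expI_eq_iff b b').mp
          (mul_right_cancel₀ (by exact_mod_cast hco.ne') h2)
    · rintro ⟨hcc, ha, hb⟩
      subst hcc
      have e1 := (expI_eq_iff a a').mpr ha
      have e2 := (expI_eq_iff b b').mpr hb
      show (_, _) = (_, _)
      rw [e1, e2]
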